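/- arXiv:2108.02496 — 3 statements merged into one kernel-verified Lean document; each statement's English description precedes it below -/
import Mathlib

section
/- Let $Z \in \mathrm{GL}(n, \mathbb{C})$ be diagonal with distinct nonzero eigenvalues $z_1, \ldots, z_n$, let $t \in \mathbb{C}^\times$ be such that $z_i \neq t z_j$ for all $i, j$, and let $W = (1, \ldots, 1)^T$. Define $V \in \mathrm{Mat}(1 \times n, \mathbb{C})$ by $V_j = (1-t) t^{-n} \prod_{k \neq j} \frac{z_k - t z_j}{z_k - z_j}$. Then the matrix $t(\mathrm{Id}_n + W V) Z$ has characteristic polynomial equal to that of $Z$, i.e. $\det(Z - \lambda \mathrm{Id}_n) = \det(t Z + t W V Z - \lambda \mathrm{Id}_n)$ for all $\lambda \in \mathbb{C}$. -/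
open Polynomial Finset Matrix

lemma aux_key (n : ℕ) (z : Fin n → ℂ) (t : ℂ)
    (hzinj : Function.Injective z) (ht : t ≠ 0)
    (lam : ℂ) :
    ∏ i, (z i - lam) = ∏ i, (t * z i - lam) +
      ∑ j, (t * ((1 - t) * t⁻¹ ^ n *
        ∏ k ∈ Finset.univ.erase j, (z k - t * z j) / (z k - z j)) * z j) *
        ∏ i ∈ Finset.univ.erase j, (t * z i - lam) := by
  rcases Nat.eq_zero_or_pos n with hn | hn
  · subst hn; simp
  set c : Fin n → ℂ := fun j => t * ((1 - t) * t⁻¹ ^ n *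
        ∏ k ∈ Finset.univ.erase j, (z k - t * z j) / (z k - z j)) * z j with hc
  set p : ℂ[X] := ∏ i, (C (z i) - X) - ∏ i, (C (t * z i) - X)
      - ∑ j, C (c j) * ∏ i ∈ Finset.univ.erase j, (C (t * z i) - X) with hp
  have hfac : ∀ a : ℂ, (C a - X : ℂ[X]) = -(X - C a) := fun a => (neg_sub _ _).symm
  have hdeg1 : ∀ a : ℂ, (C a - X : ℂ[X]).degree = 1 := by
    intro a; rw [hfac, degree_neg, degree_X_sub_C]
  have hlc1 : ∀ a : ℂ, (C a - X : ℂ[X]).leadingCoeff = -1 := by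
    intro a; rw [hfac, leadingCoeff_neg, (monic_X_sub_C a).leadingCoeff]
  have hone : t⁻¹ ^ n * t ^ n = 1 := by rw [← mul_pow, inv_mul_cancel₀ ht, one_pow]
  have h2 : t * t ^ (n - 1) = t ^ n := by
    conv_rhs => rw [← Nat.sub_add_cancel hn]
    rw [pow_succ]; ring
  have hpz : p = 0 := by
    by_cases hp0 : p = 0
    · exact hp0
    apply eq_zero_of_natDegree_lt_card_of_eval_eq_zero p
      (f := fun j : Fin n => t * z j)
      (fun i j hij => hzinj (mul_left_cancel₀ ht hij))
    · -- eval at t * z j is zero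
      intro j
      have hprod0 : (∏ i, (t * z i - t * z j)) = 0 :=
        Finset.prod_eq_zero (Finset.mem_univ j) (sub_self _)
      have hsum : ∑ k, c k * ∏ i ∈ Finset.univ.erase k, (t * z i - t * z j)
          = c j * ∏ i ∈ Finset.univ.erase j, (t * z i - t * z j) := by
        apply Finset.sum_eq_single
        · intro k _ hkj
          have : (∏ i ∈ Finset.univ.erase k, (t * z i - t * z j)) = 0 :=
            Finset.prod_eq_zero (Finset.mem_erase.mpr ⟨(Ne.symm hkj), Finset.mem_univ j⟩)
              (sub_self _)
          rw [this, mul_zero]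
        · intro h; exact absurd (Finset.mem_univ j) h
      have hden : (∏ k ∈ Finset.univ.erase j, (z k - z j)) ≠ 0 := by
        apply Finset.prod_ne_zero_iff.mpr
        intro k hk
        exact sub_ne_zero_of_ne (fun h => (Finset.mem_erase.mp hk).1 (hzinj h))
      have hQ : (∏ k ∈ Finset.univ.erase j, (z k - t * z j) / (z k - z j)) *
          (∏ k ∈ Finset.univ.erase j, (z k - z j))
          = ∏ k ∈ Finset.univ.erase j, (z k - t * z j) := by
        rw [Finset.prod_div_distrib, div_mul_cancel₀ _ hden]
      have hprodt : (∏ i ∈ Finset.univ.erase j, (t * z i - t * z j))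
          = t ^ (n - 1) * ∏ i ∈ Finset.univ.erase j, (z i - z j) := by
        calc (∏ i ∈ Finset.univ.erase j, (t * z i - t * z j))
            = ∏ i ∈ Finset.univ.erase j, (t * (z i - z j)) := by
              apply Finset.prod_congr rfl; intros; ring
          _ = t ^ (Finset.univ.erase j).card * ∏ i ∈ Finset.univ.erase j, (z i - z j) := by
              rw [Finset.prod_mul_distrib, Finset.prod_const]
          _ = t ^ (n - 1) * ∏ i ∈ Finset.univ.erase j, (z i - z j) := by
              rw [Finset.card_erase_of_mem (Finset.mem_univ j), Finset.card_univ,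
                Fintype.card_fin]
      have hcj : c j * (t ^ (n - 1) * ∏ i ∈ Finset.univ.erase j, (z i - z j))
          = (1 - t) * z j * ∏ k ∈ Finset.univ.erase j, (z k - t * z j) := by
        calc c j * (t ^ (n - 1) * ∏ i ∈ Finset.univ.erase j, (z i - z j))
            = (1 - t) * z j *
              (((∏ k ∈ Finset.univ.erase j, (z k - t * z j) / (z k - z j)) *
                ∏ i ∈ Finset.univ.erase j, (z i - z j)) *
                (t⁻¹ ^ n * (t * t ^ (n - 1)))) := by rw [hc]; ring
          _ = (1 - t) * z j * ∏ k ∈ Finset.univ.erase j, (z k - t * z j) := by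
              rw [hQ, h2, hone, mul_one]
      have hsplit : (∏ i, (z i - t * z j))
          = (z j - t * z j) * ∏ i ∈ Finset.univ.erase j, (z i - t * z j) :=
        (Finset.mul_prod_erase Finset.univ _ (Finset.mem_univ j)).symm
      simp only [hp, eval_sub, eval_prod, eval_finset_sum, eval_mul, eval_C, eval_X]
      rw [hprod0, hsum, hprodt, hcj, hsplit]
      ring
    · -- degree bound
      have hdq1 : (∏ i, (C (z i) - X) : ℂ[X]).degree = (n : WithBot ℕ) := by
        rw [degree_prod]
        simp only [hdeg1]
        rw [Finset.sum_const, Finset.card_univ, Fintype.card_fin, nsmul_eq_mul, mul_one]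
      have hdq2 : (∏ i, (C (t * z i) - X) : ℂ[X]).degree = (n : WithBot ℕ) := by
        rw [degree_prod]
        simp only [hdeg1]
        rw [Finset.sum_const, Finset.card_univ, Fintype.card_fin, nsmul_eq_mul, mul_one]
      have hlcq1 : (∏ i, (C (z i) - X) : ℂ[X]).leadingCoeff = (-1) ^ n := by
        rw [leadingCoeff_prod]
        simp only [hlc1]
        rw [Finset.prod_const, Finset.card_univ, Fintype.card_fin]
      have hlcq2 : (∏ i, (C (t * z i) - X) : ℂ[X]).leadingCoeff = (-1) ^ n := by
        rw [leadingCoeff_prod]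
        simp only [hlc1]
        rw [Finset.prod_const, Finset.card_univ, Fintype.card_fin]
      have hq1ne : (∏ i, (C (z i) - X) : ℂ[X]) ≠ 0 := by
        apply leadingCoeff_ne_zero.mp
        rw [hlcq1]; exact pow_ne_zero _ (by norm_num)
      have h12 : ((∏ i, (C (z i) - X)) - (∏ i, (C (t * z i) - X)) : ℂ[X]).degree
          < (n : WithBot ℕ) := by
        have := degree_sub_lt (hdq1.trans hdq2.symm) hq1ne (hlcq1.trans hlcq2.symm)
        rwa [hdq1] at this
      have hS : (∑ j, C (c j) * ∏ i ∈ Finset.univ.erase j, (C (t * z i) - X) : ℂ[X]).degree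
          < (n : WithBot ℕ) := by
        apply lt_of_le_of_lt (degree_sum_le _ _)
        apply (Finset.sup_lt_iff (by exact WithBot.bot_lt_coe n)).mpr
        intro j _
        have hdpe : (∏ i ∈ Finset.univ.erase j, (C (t * z i) - X) : ℂ[X]).degree
            = ((n - 1 : ℕ) : WithBot ℕ) := by
          rw [degree_prod]
          simp only [hdeg1]
          rw [Finset.sum_const, Finset.card_erase_of_mem (Finset.mem_univ j),
            Finset.card_univ, Fintype.card_fin, nsmul_eq_mul, mul_one]
        calc (C (c j) * ∏ i ∈ Finset.univ.erase j, (C (t * z i) - X) : ℂ[X]).degree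
            ≤ 0 + ((n - 1 : ℕ) : WithBot ℕ) :=
              (degree_mul_le _ _).trans (add_le_add degree_C_le hdpe.le)
          _ < (n : WithBot ℕ) := by
              rw [zero_add]
              exact_mod_cast Nat.sub_lt hn one_pos
      rw [Fintype.card_fin]
      have hdp : p.degree < (n : WithBot ℕ) :=
        lt_of_le_of_lt (degree_sub_le _ _) (max_lt h12 hS)
      exact (natDegree_lt_iff_degree_lt hp0).mpr hdp
  have := congrArg (eval lam) hpz
  simp only [hp, eval_sub, eval_prod, eval_finset_sum, eval_mul, eval_C, eval_X,
    eval_zero] at this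
  linear_combination this

lemma aux_det (n : ℕ) (d : Fin n → ℂ) (hd : ∀ i, d i ≠ 0) (v : Fin n → ℂ) :
    (Matrix.diagonal d + Matrix.replicateCol (Fin 1) (fun _ => (1 : ℂ)) * Matrix.replicateRow (Fin 1) v).det
      = (∏ i, d i) * (1 + ∑ j, v j * (d j)⁻¹) := by
  have hfactor : Matrix.diagonal d + Matrix.replicateCol (Fin 1) (fun _ => (1 : ℂ)) * Matrix.replicateRow (Fin 1) v
      = Matrix.diagonal d *
        (1 + Matrix.replicateCol (Fin 1) (fun i => (d i)⁻¹) * Matrix.replicateRow (Fin 1) v) := by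
    rw [Matrix.mul_add, Matrix.mul_one, ← Matrix.mul_assoc]
    congr 2
    ext i j
    simp only [Matrix.mul_apply, Matrix.diagonal_apply, Matrix.replicateCol_apply, ite_mul, zero_mul,
      Finset.sum_ite_eq, Finset.mem_univ, if_true]
    exact (mul_inv_cancel₀ (hd i)).symm
  have hdet : (1 + Matrix.replicateCol (Fin 1) (fun i => (d i)⁻¹) * Matrix.replicateRow (Fin 1) v).det
      = 1 + v ⬝ᵥ (fun i => (d i)⁻¹) :=
    Matrix.det_one_add_replicateCol_mul_replicateRow (ι := Fin 1) _ _
  rw [hfactor, Matrix.det_mul, Matrix.det_diagonal, hdet]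
  simp [dotProduct, mul_comm]

/-- Let `Z = diag(z₁,…,zₙ)` with the `zᵢ` nonzero and pairwise distinct, let `t ≠ 0` be such
that `zᵢ ≠ t·zⱼ` for all `i, j`, and let `W = (1,…,1)ᵀ`.  With
`Vⱼ = (1-t) t^{-n} ∏_{k≠j} (z_k - t z_j)/(z_k - z_j)`, the matrix `t(Id + W V)Z` is
isospectral to `Z`:  `det(Z - λ·Id) = det(tZ + tWVZ - λ·Id)` for every `λ`. -/
theorem rank_one_perturbation_isospectral (n : ℕ) (z : Fin n → ℂ) (t : ℂ)
    (hz0 : ∀ i, z i ≠ 0) (hzinj : Function.Injective z) (ht : t ≠ 0)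
    (hzt : ∀ i j, z i ≠ t * z j)
    (W : Matrix (Fin n) (Fin 1) ℂ) (hW : ∀ i, W i 0 = 1)
    (V : Matrix (Fin 1) (Fin n) ℂ)
    (hV : ∀ j, V 0 j = (1 - t) * t⁻¹ ^ n *
      ∏ k ∈ Finset.univ.erase j, (z k - t * z j) / (z k - z j)) :
    ∀ lam : ℂ,
      (Matrix.diagonal z - lam • (1 : Matrix (Fin n) (Fin n) ℂ)).det =
      (t • Matrix.diagonal z + t • (W * V * Matrix.diagonal z)
        - lam • (1 : Matrix (Fin n) (Fin n) ℂ)).det := by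
  intro lam
  set A : Matrix (Fin n) (Fin n) ℂ :=
    t • Matrix.diagonal z + t • (W * V * Matrix.diagonal z) with hA
  have hL : ∀ mu : ℂ,
      (Matrix.diagonal z - mu • (1 : Matrix (Fin n) (Fin n) ℂ)).det = ∏ i, (z i - mu) := by
    intro mu
    rw [Matrix.smul_one_eq_diagonal, Matrix.diagonal_sub, Matrix.det_diagonal]
  -- generic case
  have hgen : ∀ mu : ℂ, (∀ i, t * z i ≠ mu) →
      (A - mu • 1).det = ∏ i, (z i - mu) := by
    intro mu hmu
    have hd : ∀ i, t * z i - mu ≠ 0 := fun i => sub_ne_zero_of_ne (hmu i)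
    have hMeq : A - mu • 1 = Matrix.diagonal (fun i => t * z i - mu)
        + Matrix.replicateCol (Fin 1) (fun _ => (1 : ℂ)) *
          Matrix.replicateRow (Fin 1) (fun j => t * (V 0 j * z j)) := by
      ext i j
      simp only [hA, Matrix.sub_apply, Matrix.add_apply, Matrix.smul_apply, smul_eq_mul,
        Matrix.mul_apply, Matrix.diagonal_apply, Matrix.one_apply, Matrix.replicateCol_apply,
        Matrix.replicateRow_apply, Fin.sum_univ_one, hW, one_mul, mul_ite, mul_zero, ite_mul,
        zero_mul, Finset.sum_ite_eq, Finset.mem_univ, if_true]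
      by_cases h : i = j
      · simp [h, Finset.sum_ite_eq']
        try ring
      · simp [h, Finset.sum_ite_eq']
        try ring
    rw [hMeq, aux_det n _ hd _, aux_key n z t hzinj ht mu]
    rw [mul_add, mul_one, Finset.mul_sum]
    congr 1
    apply Finset.sum_congr rfl
    intro j _
    rw [hV j, ← Finset.mul_prod_erase Finset.univ (fun i => t * z i - mu) (Finset.mem_univ j)]
    set E : ℂ := (1 - t) * t⁻¹ ^ n *
      ∏ k ∈ Finset.univ.erase j, (z k - t * z j) / (z k - z j) with hE
    have hdj := hd j
    field_simp
  -- polynomial extension to all mu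
  set P : ℂ[X] := (A.map C - (X : ℂ[X]) • 1).det with hP
  set q1 : ℂ[X] := ∏ i, (C (z i) - X) with hq1
  have heval : ∀ x : ℂ, eval x P = (A - x • 1).det := by
    intro x
    rw [hP, ← Polynomial.coe_evalRingHom, RingHom.map_det]
    congr 1
    ext i j
    by_cases h : i = j
    · simp [h, Matrix.sub_apply, Matrix.smul_apply, Matrix.one_apply, smul_eq_mul]
    · simp [h, Matrix.sub_apply, Matrix.smul_apply, Matrix.one_apply, smul_eq_mul]
  have hq1eval : ∀ x : ℂ, eval x q1 = ∏ i, (z i - x) := by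
    intro x; simp [hq1, eval_prod]
  have hPq : P = q1 := by
    apply Polynomial.eq_of_infinite_eval_eq
    apply Set.Infinite.mono (s := (Set.range fun i => t * z i)ᶜ)
    · intro x hx
      simp only [Set.mem_compl_iff, Set.mem_range, not_exists] at hx
      show eval x P = eval x q1
      rw [heval x, hq1eval x, hgen x hx]
    · exact (Set.finite_range _).infinite_compl
  have := congrArg (eval lam) hPq
  rw [heval lam, hq1eval lam] at this
  rw [hL lam, ← this]
end

section
/- Fix $m \geq 2$, $n \geq 1$, nonzero complex numbers $q_0, \ldots, q_{m-1}$ with $t := q_0 \cdots q_{m-1}$, and $\lambda_1, \ldots, \lambda_n \in \mathbb{C}^\times$ with $\lambda_i^m \neq t\lambda_j^m$ for all $i, j$. Set $t_r = q_0 q_1 \cdots q_r$ for $0 \leq r \leq m-1$, $t_{-1} = 1$. Given matrices $\mathbf{g}^0, \ldots, \mathbf{g}^{m-1} \in \mathrm{Mat}(n \times n, \mathbb{C})$, define for each $r \in \{0, \ldots, m-1\}$ the matrix $Z_r$ by $(Z_r)_{ij} = \sum_{s=0}^{r} \frac{t_r}{t_{s-1}} \frac{\lambda_i^{m+s-r-1}\lambda_j^{-(s-r-1)}}{\lambda_i^m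 - t\lambda_j^m}\, \mathbf{g}^s_{ij} + \sum_{s=r+1}^{m-1} \frac{t\, t_r}{t_{s-1}} \frac{\lambda_i^{s-r-1}\lambda_j^{m-(s-r-1)}}{\lambda_i^m - t\lambda_j^m}\, \mathbf{g}^s_{ij}$, and let $\Lambda = \mathrm{diag}(\lambda_1, \ldots, \lambda_n)$. Then the $m$ matrix equations $\Lambda Z_s \Lambda^{-1} = q_s Z_{s-1} + q_s \mathbf{g}^s$ hold for all $s \in \mathbb{Z}/m$ (indices of $Z$ taken mod $m$). -/
/-- Partial products `tpar q 0 = 1 = t_{-1}`, `tpar q (s+1) = q_0 ⋯ q_s = t_s`. -/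
noncomputable def tpar (q : ℕ → ℂ) (s : ℕ) : ℂ := ∏ i ∈ Finset.range s, q i

/-- The matrix `Z_r` defined by formula (4.11) of the paper:
`(Z_r)_{ij} = ∑_{s=0}^{r} (t_r/t_{s-1}) λ_i^{m+s-r-1} λ_j^{-(s-r-1)}/(λ_i^m - t λ_j^m) 𝐠^s_{ij}
  + ∑_{s=r+1}^{m-1} (t t_r/t_{s-1}) λ_i^{s-r-1} λ_j^{m-(s-r-1)}/(λ_i^m - t λ_j^m) 𝐠^s_{ij}`. -/
noncomputable def Zloc (m n : ℕ) (q : ℕ → ℂ) (t : ℂ) (lam : Fin n → ℂ)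
    (g : ℕ → Matrix (Fin n) (Fin n) ℂ) (r : ℕ) : Matrix (Fin n) (Fin n) ℂ :=
  Matrix.of fun i j =>
    (∑ s ∈ Finset.range (r + 1),
      (tpar q (r + 1) / tpar q s) *
        (lam i ^ (m + s - r - 1) * lam j ^ (r + 1 - s) / (lam i ^ m - t * lam j ^ m)) * g s i j)
    + ∑ s ∈ Finset.Icc (r + 1) (m - 1),
      (t * tpar q (r + 1) / tpar q s) *
        (lam i ^ (s - r - 1) * lam j ^ (m - (s - r - 1)) / (lam i ^ m - t * lam j ^ m)) * g s i j

set_option maxHeartbeats 1600000 in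
/-- The matrices `Z_r` of `Zloc` solve the reduced moment map equations in the diagonal gauge:
`Λ Z_s Λ⁻¹ = q_s Z_{s-1} + q_s 𝐠^s` for all `s ∈ ℤ/m` (indices of `Z` taken mod `m`). -/
theorem Zloc_solves_moment_map (m n : ℕ) (hm : 2 ≤ m) (hn : 1 ≤ n)
    (q : ℕ → ℂ) (hq : ∀ s, s < m → q s ≠ 0)
    (t : ℂ) (ht : t = ∏ s ∈ Finset.range m, q s)
    (lam : Fin n → ℂ) (hlam : ∀ i, lam i ≠ 0)
    (hreg : ∀ i j, lam i ^ m ≠ t * lam j ^ m)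
    (g : ℕ → Matrix (Fin n) (Fin n) ℂ) :
    ∀ s : ℕ, s < m →
      Matrix.diagonal lam * Zloc m n q t lam g s * Matrix.diagonal (fun i => (lam i)⁻¹)
        = q s • Zloc m n q t lam g ((s + m - 1) % m) + q s • g s := by
  intro s hs
  have hD : ∀ i j : Fin n, lam i ^ m - t * lam j ^ m ≠ 0 := fun i j => sub_ne_zero.mpr (hreg i j)
  have hT : ∀ u, u ≤ m → tpar q u ≠ 0 := by
    intro u hu
    exact Finset.prod_ne_zero_iff.mpr fun i hi => hq i (lt_of_lt_of_le (Finset.mem_range.mp hi) hu)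
  ext i j
  simp only [Matrix.mul_diagonal, Matrix.diagonal_mul, Matrix.add_apply, Matrix.smul_apply,
    smul_eq_mul, Zloc, Matrix.of_apply]
  rcases Nat.eq_zero_or_pos s with hs0 | hs1
  · subst hs0
    rw [Nat.mod_eq_of_lt (show 0 + m - 1 < m by omega), show 0 + m - 1 = m - 1 from by omega,
      show m - 1 + 1 = m from by omega]
    rw [Finset.Icc_eq_empty (show ¬ m ≤ m - 1 by omega), Finset.sum_empty, add_zero]
    simp only [zero_add, Finset.sum_range_one]
    rw [Finset.range_eq_Ico, Finset.sum_eq_sum_Ico_succ_bot (show 0 < m by omega),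
      show Finset.Icc (0 + 1) (m-1) = Finset.Ico 1 m from by rw [← Finset.Ico_add_one_right_eq_Icc]; congr 1; omega]
    simp only [zero_add]
    rw [mul_add, add_mul, Finset.mul_sum, Finset.sum_mul, mul_add, Finset.mul_sum]
    have hterm : ∀ x ∈ Finset.Ico 1 m,
        lam i * (t * tpar q 1 / tpar q x *
            (lam i ^ (x - 0 - 1) * lam j ^ (m - (x - 0 - 1)) / (lam i ^ m - t * lam j ^ m)) *
          g x i j) * (lam j)⁻¹
        = q 0 * (tpar q m / tpar q x *
            (lam i ^ (m + x - (m - 1) - 1) * lam j ^ (m - x) / (lam i ^ m - t * lam j ^ m)) *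
          g x i j) := by
      intro x hx
      rw [Finset.mem_Ico] at hx
      rw [show x - 0 - 1 = x - 1 from by omega, show m - (x - 1) = (m - x) + 1 from by omega,
        show m + x - (m - 1) - 1 = (x - 1) + 1 from by omega, pow_succ, pow_succ,
        show tpar q 1 = q 0 from by simp [tpar], show tpar q m = t from by rw [tpar, ← ht]]
      field_simp [hlam i, hlam j, hT x (le_of_lt hx.2), hD i j]
    rw [Finset.sum_congr rfl hterm]
    have hm' : lam i ^ m = lam i ^ (m - 1) * lam i := by
      rw [← pow_succ]; congr 1; omega
    have hres : lam i * (tpar q 1 / tpar q 0 *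
          (lam i ^ (m + 0 - 0 - 1) * lam j ^ (1 - 0) / (lam i ^ m - t * lam j ^ m)) * g 0 i j) *
        (lam j)⁻¹
        = q 0 * (tpar q m / tpar q 0 *
            (lam i ^ (m + 0 - (m - 1) - 1) * lam j ^ (m - 0) / (lam i ^ m - t * lam j ^ m)) *
          g 0 i j) + q 0 * g 0 i j := by
      have hD' := hD i j
      rw [show m + 0 - 0 - 1 = m - 1 from by omega, show 1 - 0 = 1 from rfl,
        show m + 0 - (m - 1) - 1 = 0 from by omega, show m - 0 = m from rfl, pow_zero, pow_one,
        show tpar q 1 = q 0 from by simp [tpar], show tpar q m = t from by rw [tpar, ← ht],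
        show tpar q 0 = 1 from by simp [tpar]]
      rw [hm'] at hD' ⊢
      have hD'' : lam i * lam i ^ (m - 1) - t * lam j ^ m ≠ 0 := by rwa [mul_comm]
      field_simp [hlam i, hlam j, hD'']
      ring
    linear_combination hres
  · rw [show s + m - 1 = s - 1 + m from by omega, Nat.add_mod_right,
      Nat.mod_eq_of_lt (show s - 1 < m by omega)]
    rw [Finset.sum_range_succ,
      show Finset.Icc (s + 1) (m - 1) = Finset.Ico (s + 1) m from by
        rw [← Finset.Ico_add_one_right_eq_Icc]; congr 1; omega,
      show s - 1 + 1 = s from by omega,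
      show Finset.Icc s (m - 1) = Finset.Ico s m from by
        rw [← Finset.Ico_add_one_right_eq_Icc]; congr 1; omega,
      Finset.sum_eq_sum_Ico_succ_bot (show s < m from hs)]
    rw [mul_add, add_mul, mul_add, add_mul, mul_add, mul_add,
      Finset.mul_sum, Finset.sum_mul, Finset.mul_sum, Finset.sum_mul,
      Finset.mul_sum, Finset.mul_sum]
    have hts : tpar q (s + 1) = tpar q s * q s := Finset.prod_range_succ q s
    have h1 : ∀ x ∈ Finset.range s,
        lam i * (tpar q (s + 1) / tpar q x *
            (lam i ^ (m + x - s - 1) * lam j ^ (s + 1 - x) / (lam i ^ m - t * lam j ^ m)) *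
          g x i j) * (lam j)⁻¹
        = q s * (tpar q s / tpar q x *
            (lam i ^ (m + x - (s - 1) - 1) * lam j ^ (s - x) / (lam i ^ m - t * lam j ^ m)) *
          g x i j) := by
      intro x hx
      rw [Finset.mem_range] at hx
      rw [show s + 1 - x = (s - x) + 1 from by omega,
        show m + x - (s - 1) - 1 = (m + x - s - 1) + 1 from by omega, pow_succ, pow_succ, hts]
      field_simp [hlam i, hlam j, hT x (by omega), hT s (by omega), hD i j]
    have h3 : ∀ x ∈ Finset.Ico (s + 1) m,
        lam i * (t * tpar q (s + 1) / tpar q x *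
            (lam i ^ (x - s - 1) * lam j ^ (m - (x - s - 1)) / (lam i ^ m - t * lam j ^ m)) *
          g x i j) * (lam j)⁻¹
        = q s * (t * tpar q s / tpar q x *
            (lam i ^ (x - (s - 1) - 1) * lam j ^ (m - (x - (s - 1) - 1)) / (lam i ^ m - t * lam j ^ m)) *
          g x i j) := by
      intro x hx
      rw [Finset.mem_Ico] at hx
      rw [show x - (s - 1) - 1 = (x - s - 1) + 1 from by omega,
        show m - (x - s - 1) = (m - (x - s - 1 + 1)) + 1 from by omega, pow_succ, pow_succ, hts]
      field_simp [hlam i, hlam j, hT x (by omega), hT s (by omega), hD i j]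
    have hm' : lam i ^ m = lam i ^ (m - 1) * lam i := by
      rw [← pow_succ]; congr 1; omega
    have h2 : lam i * (tpar q (s + 1) / tpar q s *
          (lam i ^ (m + s - s - 1) * lam j ^ (s + 1 - s) / (lam i ^ m - t * lam j ^ m)) *
        g s i j) * (lam j)⁻¹
        = q s * (t * tpar q s / tpar q s *
            (lam i ^ (s - (s - 1) - 1) * lam j ^ (m - (s - (s - 1) - 1)) / (lam i ^ m - t * lam j ^ m)) *
          g s i j) + q s * g s i j := by
      have hD' := hD i j
      rw [show m + s - s - 1 = m - 1 from by omega, show s + 1 - s = 1 from by omega,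
        show s - (s - 1) - 1 = 0 from by omega, show m - 0 = m from rfl, pow_zero, pow_one, hts]
      rw [hm'] at hD' ⊢
      have hD'' : lam i * lam i ^ (m - 1) - t * lam j ^ m ≠ 0 := by rwa [mul_comm]
      field_simp [hlam i, hlam j, hT s (by omega), hD'']
      ring
    rw [Finset.sum_congr rfl h1, Finset.sum_congr rfl h3]
    linear_combination h2
end

section
/- Let $N \geq 1$ and let $B, C, Y^{(b)}, Y^{(c)}, \Phi^{(b)}, \Phi^{(c)}$ be $N \times N$ complex matrix-valued smooth functions of two commuting flow parameters $t, \tau$ satisfying: $\frac{d Y^{(b)}}{dt} = 0$, $\frac{d\Phi^{(b)}}{dt} = 0$, $\frac{dY^{(c)}}{dt} = 0$, $\frac{d\Phi^{(c)}}{d\tau} = 0$, $\frac{dY^{(c)}}{d\tau} = 0$, $\frac{d\Phi^{(b)}}{d\tau} = -(Y^{(c)})^l \Phi^{(b)} + \Phi^{(b)} Y (Y^{(c)})^{l-1}\Phi^{(c)}$, $\frac{dY}{dt} = 0$, $\frac{dY}{d\tau} = 0$, $\frac{dX}{dt} = -(Y^{(b)})^{k-1}\Phi^{(b)} - (Y^{(b)})^k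 X$, $\frac{dX}{d\tau} = -(Y^{(c)})^{l-1}\Phi^{(c)} - (Y^{(c)})^l X$, where $Y^{(b)} = \Phi^{(b)} Y$, $Y^{(c)} = \Phi^{(c)} Y$, and additionally $\frac{dY^{(b)}}{d\tau} = -(Y^{(c)})^l Y^{(b)} + Y^{(b)}(Y^{(c)})^l$. Then the two flows commute on $X$: $\frac{d}{dt}\frac{d}{d\tau}X = \frac{d}{d\tau}\frac{d}{dt}X = (Y^{(c)})^l (Y^{(b)})^{k-1}\Phi^{(b)} + (Y^{(c)})^l (Y^{(b)})^k X$. -/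
open NormedSpace

section FlowsAux

variable {N : ℕ}

attribute [local instance] Matrix.linftyOpNormedAddCommGroup Matrix.linftyOpNormedRing
  Matrix.linftyOpNormedAlgebra

noncomputable section

instance flowsAux_complete : CompleteSpace (Matrix (Fin N) (Fin N) ℂ) :=
  inferInstance

lemma flowsAux_norm_entry_le (A : Matrix (Fin N) (Fin N) ℂ) (i j : Fin N) : ‖A i j‖ ≤ ‖A‖ := by
  have h : ‖A i j‖₊ ≤ ‖A‖₊ := by
    rw [Matrix.linfty_opNNNorm_def]
    exact le_trans
      (Finset.single_le_sum (f := fun j' => ‖A i j'‖₊) (fun _ _ => zero_le) (Finset.mem_univ j))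
      (Finset.le_sup (f := fun i' => ∑ j', ‖A i' j'‖₊) (Finset.mem_univ i))
  exact_mod_cast h

def flowsAux_entryCLM (i j : Fin N) : Matrix (Fin N) (Fin N) ℂ →L[ℝ] ℂ :=
  LinearMap.mkContinuous
    { toFun := fun A => A i j
      map_add' := fun _ _ => rfl
      map_smul' := fun _ _ => rfl } 1
    (fun A => by rw [one_mul]; exact flowsAux_norm_entry_le A i j)

lemma flowsAux_hd_entry {f : ℝ → Matrix (Fin N) (Fin N) ℂ} {f' : Matrix (Fin N) (Fin N) ℂ}
    {x : ℝ} (hf : HasDerivAt f f' x) (i j : Fin N) :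
    HasDerivAt (fun w => f w i j) (f' i j) x :=
  (flowsAux_entryCLM i j).hasFDerivAt.comp_hasDerivAt x hf

lemma flowsAux_hd_mulE {f g : ℝ → Matrix (Fin N) (Fin N) ℂ}
    {a b fx gx : Matrix (Fin N) (Fin N) ℂ} {x : ℝ}
    (hf : ∀ i j, HasDerivAt (fun v => f v i j) (a i j) x)
    (hg : ∀ i j, HasDerivAt (fun v => g v i j) (b i j) x)
    (hfx : f x = fx) (hgx : g x = gx) (i j : Fin N) :
    HasDerivAt (fun v => (f v * g v) i j) ((a * gx + fx * b) i j) x := by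
  subst hfx hgx
  simp only [Matrix.mul_apply, Matrix.add_apply]
  rw [← Finset.sum_add_distrib]
  exact HasDerivAt.fun_sum fun m _ => (hf i m).mul (hg m j)

lemma flowsAux_hd_powE {f : ℝ → Matrix (Fin N) (Fin N) ℂ} {C fx : Matrix (Fin N) (Fin N) ℂ}
    {x : ℝ}
    (hf : ∀ i j, HasDerivAt (fun v => f v i j) ((-(C * fx) + fx * C) i j) x)
    (hfx : f x = fx) :
    ∀ (m : ℕ) (i j : Fin N),
      HasDerivAt (fun v => (f v ^ m) i j) ((-(C * fx ^ m) + fx ^ m * C) i j) x := by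
  intro m
  induction m with
  | zero =>
    intro i j
    simp only [pow_zero, mul_one, one_mul, neg_add_cancel, Matrix.zero_apply]
    exact hasDerivAt_const x _
  | succ n ih =>
    intro i j
    have h := flowsAux_hd_mulE (f := fun v => f v ^ n) (g := f)
      (a := -(C * fx ^ n) + fx ^ n * C) (b := -(C * fx) + fx * C)
      (fx := fx ^ n) (gx := fx)
      ih hf (by show f x ^ n = fx ^ n; rw [hfx]) hfx i j
    have key : (-(C * fx ^ (n + 1)) + fx ^ (n + 1) * C)
        = ((-(C * fx ^ n) + fx ^ n * C) * fx + fx ^ n * (-(C * fx) + fx * C)) := by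
      simp only [pow_succ]; noncomm_ring
    simp only [pow_succ] at h ⊢
    rw [show (-(C * (fx ^ n * fx)) + fx ^ n * fx * C)
        = ((-(C * fx ^ n) + fx ^ n * C) * fx + fx ^ n * (-(C * fx) + fx * C)) from by noncomm_ring]
    exact h

lemma flowsAux_const_of {f : ℝ → ℂ} (h : ∀ x, HasDerivAt f 0 x) (a b : ℝ) : f a = f b :=
  is_const_of_deriv_eq_zero (fun x => (h x).differentiableAt) (fun x => (h x).deriv) a b

def flowsAux_Amat {N : ℕ} (k : ℕ) (Yb Pb X : ℝ → ℝ → Matrix (Fin N) (Fin N) ℂ)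
    (s v : ℝ) : Matrix (Fin N) (Fin N) ℂ :=
  -(Yb s v ^ (k - 1) * Pb s v) - Yb s v ^ k * X s v

lemma flowsAux_hdA_gen {N k l : ℕ} (hk : 1 ≤ k)
    {X Y Yb Yc Pb Pc : ℝ → ℝ → Matrix (Fin N) (Fin N) ℂ}
    (hYbdef : ∀ t τ, Yb t τ = Pb t τ * Y t τ)
    (hPb_τ : ∀ (t τ : ℝ) (i j : Fin N), HasDerivAt (fun v : ℝ => Pb t v i j)
      ((-((Yc t τ) ^ l * Pb t τ) + Pb t τ * Y t τ * (Yc t τ) ^ (l - 1) * Pc t τ) i j) τ)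
    (hYb_τ : ∀ (t τ : ℝ) (i j : Fin N), HasDerivAt (fun v : ℝ => Yb t v i j)
      ((-((Yc t τ) ^ l * Yb t τ) + Yb t τ * (Yc t τ) ^ l) i j) τ)
    (hX_τ : ∀ (t τ : ℝ) (i j : Fin N), HasDerivAt (fun v : ℝ => X t v i j)
      ((-((Yc t τ) ^ (l - 1) * Pc t τ) - (Yc t τ) ^ l * X t τ) i j) τ)
    (s v₀ : ℝ) (i' j' : Fin N) :
    HasDerivAt (fun v => flowsAux_Amat k Yb Pb X s v i' j')
      ((-(Yc s v₀ ^ l * flowsAux_Amat k Yb Pb X s v₀)) i' j') v₀ := by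
  have hp1 := flowsAux_hd_powE (f := fun v => Yb s v) (C := Yc s v₀ ^ l) (fx := Yb s v₀)
    (fun a b => hYb_τ s v₀ a b) rfl (k - 1)
  have hp2 := flowsAux_hd_powE (f := fun v => Yb s v) (C := Yc s v₀ ^ l) (fx := Yb s v₀)
    (fun a b => hYb_τ s v₀ a b) rfl k
  have h1 := flowsAux_hd_mulE (f := fun v => Yb s v ^ (k - 1)) (g := fun v => Pb s v)
    (fx := Yb s v₀ ^ (k - 1)) (gx := Pb s v₀)
    hp1 (fun a b => hPb_τ s v₀ a b) rfl rfl i' j'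
  have h2 := flowsAux_hd_mulE (f := fun v => Yb s v ^ k) (g := fun v => X s v)
    (fx := Yb s v₀ ^ k) (gx := X s v₀)
    hp2 (fun a b => hX_τ s v₀ a b) rfl rfl i' j'
  have h := h1.neg.sub h2
  have hfun : (fun v => flowsAux_Amat k Yb Pb X s v i' j')
      = fun v => (-((Yb s v ^ (k - 1) * Pb s v) i' j') - (Yb s v ^ k * X s v) i' j') := by
    funext v; simp [flowsAux_Amat, Matrix.sub_apply, Matrix.neg_apply]
  rw [hfun]
  have key : (-(Yc s v₀ ^ l * flowsAux_Amat k Yb Pb X s v₀))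
      = -(((-(Yc s v₀ ^ l * Yb s v₀ ^ (k - 1)) + Yb s v₀ ^ (k - 1) * Yc s v₀ ^ l) * Pb s v₀
          + Yb s v₀ ^ (k - 1)
            * (-(Yc s v₀ ^ l * Pb s v₀) + Pb s v₀ * Y s v₀ * Yc s v₀ ^ (l - 1) * Pc s v₀)))
        - ((-(Yc s v₀ ^ l * Yb s v₀ ^ k) + Yb s v₀ ^ k * Yc s v₀ ^ l) * X s v₀
          + Yb s v₀ ^ k * (-(Yc s v₀ ^ (l - 1) * Pc s v₀) - Yc s v₀ ^ l * X s v₀)) := by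
    have hpow : Yb s v₀ ^ k = Yb s v₀ ^ (k - 1) * Yb s v₀ := by
      conv_lhs => rw [← Nat.sub_add_cancel hk, pow_succ]
    rw [flowsAux_Amat, ← hYbdef s v₀, hpow]
    generalize Yb s v₀ ^ (k - 1) = B
    generalize Yc s v₀ ^ l = C
    generalize Yc s v₀ ^ (l - 1) = E
    noncomm_ring
  rw [key, Matrix.sub_apply, Matrix.neg_apply]
  exact h




/-- Commutativity of the two Hamiltonian flows (end of Section 3 of the paper): given
matrix-valued functions `X, Y, Y⁽ᵇ⁾, Y⁽ᶜ⁾, Φ⁽ᵇ⁾, Φ⁽ᶜ⁾` of two flow parameters `t, τ`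
satisfying the listed evolution equations, the mixed second partial derivatives of `X`
agree and equal `(Y⁽ᶜ⁾)^l (Y⁽ᵇ⁾)^{k-1} Φ⁽ᵇ⁾ + (Y⁽ᶜ⁾)^l (Y⁽ᵇ⁾)^k X`. -/
theorem flows_commute_on_X (N k l : ℕ) (hk : 1 ≤ k) (hl : 1 ≤ l)
    (X Y Yb Yc Pb Pc : ℝ → ℝ → Matrix (Fin N) (Fin N) ℂ)
    (hYbdef : ∀ t τ, Yb t τ = Pb t τ * Y t τ)
    (hYcdef : ∀ t τ, Yc t τ = Pc t τ * Y t τ)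
    (hY_t : ∀ (t τ : ℝ) (i j : Fin N), HasDerivAt (fun u : ℝ => Y u τ i j) 0 t)
    (hY_τ : ∀ (t τ : ℝ) (i j : Fin N), HasDerivAt (fun v : ℝ => Y t v i j) 0 τ)
    (hYb_t : ∀ (t τ : ℝ) (i j : Fin N), HasDerivAt (fun u : ℝ => Yb u τ i j) 0 t)
    (hPb_t : ∀ (t τ : ℝ) (i j : Fin N), HasDerivAt (fun u : ℝ => Pb u τ i j) 0 t)
    (hYc_t : ∀ (t τ : ℝ) (i j : Fin N), HasDerivAt (fun u : ℝ => Yc u τ i j) 0 t)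
    (hYc_τ : ∀ (t τ : ℝ) (i j : Fin N), HasDerivAt (fun v : ℝ => Yc t v i j) 0 τ)
    (hPc_τ : ∀ (t τ : ℝ) (i j : Fin N), HasDerivAt (fun v : ℝ => Pc t v i j) 0 τ)
    (hPb_τ : ∀ (t τ : ℝ) (i j : Fin N), HasDerivAt (fun v : ℝ => Pb t v i j)
      ((-((Yc t τ) ^ l * Pb t τ) + Pb t τ * Y t τ * (Yc t τ) ^ (l - 1) * Pc t τ) i j) τ)
    (hYb_τ : ∀ (t τ : ℝ) (i j : Fin N), HasDerivAt (fun v : ℝ => Yb t v i j)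
      ((-((Yc t τ) ^ l * Yb t τ) + Yb t τ * (Yc t τ) ^ l) i j) τ)
    (hX_t : ∀ (t τ : ℝ) (i j : Fin N), HasDerivAt (fun u : ℝ => X u τ i j)
      ((-((Yb t τ) ^ (k - 1) * Pb t τ) - (Yb t τ) ^ k * X t τ) i j) t)
    (hX_τ : ∀ (t τ : ℝ) (i j : Fin N), HasDerivAt (fun v : ℝ => X t v i j)
      ((-((Yc t τ) ^ (l - 1) * Pc t τ) - (Yc t τ) ^ l * X t τ) i j) τ) :
    ∀ (t τ : ℝ) (i j : Fin N),
      deriv (fun u : ℝ => deriv (fun v : ℝ => X u v i j) τ) t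
        = ((Yc t τ) ^ l * (Yb t τ) ^ (k - 1) * Pb t τ
            + (Yc t τ) ^ l * (Yb t τ) ^ k * X t τ) i j ∧
      deriv (fun v : ℝ => deriv (fun u : ℝ => X u v i j) t) τ
        = ((Yc t τ) ^ l * (Yb t τ) ^ (k - 1) * Pb t τ
            + (Yc t τ) ^ l * (Yb t τ) ^ k * X t τ) i j := by
  intro t τ i j
  -- `Yc` is globally constant
  have hYcc : ∀ u v, Yc u v = Yc t τ := by
    intro u v
    ext a b
    calc Yc u v a b = Yc u τ a b := flowsAux_const_of (fun x => hYc_τ u x a b) v τ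
      _ = Yc t τ a b := flowsAux_const_of (fun x => hYc_t x τ a b) u t
  have hXt' : ∀ (s v : ℝ) (a b : Fin N),
      HasDerivAt (fun u : ℝ => X u v a b) (flowsAux_Amat k Yb Pb X s v a b) s :=
    fun s v a b => hX_t s v a b
  have hdA : ∀ (s v₀ : ℝ) (a b : Fin N),
      HasDerivAt (fun v => flowsAux_Amat k Yb Pb X s v a b)
        ((-(Yc t τ ^ l * flowsAux_Amat k Yb Pb X s v₀)) a b) v₀ := by
    intro s v₀ a b
    have h := flowsAux_hdA_gen hk hYbdef hPb_τ hYb_τ hX_τ s v₀ a b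
    rwa [hYcc s v₀] at h
  have hfin : ∀ s v₀ : ℝ, -(Yc t τ ^ l * flowsAux_Amat k Yb Pb X s v₀)
      = Yc t τ ^ l * Yb s v₀ ^ (k - 1) * Pb s v₀ + Yc t τ ^ l * Yb s v₀ ^ k * X s v₀ := by
    intro s v₀
    rw [flowsAux_Amat]
    generalize Yb s v₀ ^ (k - 1) = B1
    generalize Yb s v₀ ^ k = B2
    generalize Yc t τ ^ l = C
    noncomm_ring
  -- the second mixed partial (the directly computable one)
  have conj2 : deriv (fun v : ℝ => deriv (fun u : ℝ => X u v i j) t) τ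
      = (Yc t τ ^ l * Yb t τ ^ (k - 1) * Pb t τ + Yc t τ ^ l * Yb t τ ^ k * X t τ) i j := by
    have hfun : (fun v : ℝ => deriv (fun u : ℝ => X u v i j) t)
        = fun v => flowsAux_Amat k Yb Pb X t v i j :=
      funext fun v => (hXt' t v i j).deriv
    rw [hfun, (hdA t τ i j).deriv, hfin t τ]
  -- integrating factor: exp (w • Q) with Q = Yc t τ ^ l
  have hinv : ∀ w : ℝ, NormedSpace.exp (-(w • (Yc t τ ^ l)))
      * NormedSpace.exp (w • (Yc t τ ^ l)) = 1 := by
    intro w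
    have h := NormedSpace.exp_add_of_commute ((Commute.refl (w • (Yc t τ ^ l))).neg_left)
    rw [neg_add_cancel, NormedSpace.exp_zero] at h
    exact h.symm
  have hdexp : ∀ (M : Matrix (Fin N) (Fin N) ℂ) (w₀ : ℝ) (a b : Fin N),
      HasDerivAt (fun w : ℝ => NormedSpace.exp (w • M) a b)
        ((NormedSpace.exp (w₀ • M) * M) a b) w₀ :=
    fun M w₀ a b => flowsAux_hd_entry (hasDerivAt_exp_smul_const M w₀) a b
  -- the u-derivative of X satisfies the linear ODE y' = -Q y in the τ-direction
  have step2 : ∀ s w : ℝ, NormedSpace.exp (w • (Yc t τ ^ l)) * flowsAux_Amat k Yb Pb X s (τ + w)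
      = flowsAux_Amat k Yb Pb X s τ := by
    intro s w
    ext a b
    have hconst : ∀ w₀ : ℝ, HasDerivAt
        (fun w' => (NormedSpace.exp (w' • (Yc t τ ^ l))
          * flowsAux_Amat k Yb Pb X s (τ + w')) a b) 0 w₀ := by
      intro w₀
      have hAw : ∀ a' b' : Fin N,
          HasDerivAt (fun w' : ℝ => flowsAux_Amat k Yb Pb X s (τ + w') a' b')
            ((-(Yc t τ ^ l * flowsAux_Amat k Yb Pb X s (τ + w₀))) a' b') w₀ :=
        fun a' b' => (hdA s (τ + w₀) a' b').comp_const_add τ w₀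
      have hprod := flowsAux_hd_mulE
        (f := fun w' : ℝ => NormedSpace.exp (w' • (Yc t τ ^ l)))
        (g := fun w' : ℝ => flowsAux_Amat k Yb Pb X s (τ + w'))
        (a := NormedSpace.exp (w₀ • (Yc t τ ^ l)) * (Yc t τ ^ l))
        (b := -(Yc t τ ^ l * flowsAux_Amat k Yb Pb X s (τ + w₀)))
        (fx := NormedSpace.exp (w₀ • (Yc t τ ^ l)))
        (gx := flowsAux_Amat k Yb Pb X s (τ + w₀))
        (fun a' b' => hdexp _ w₀ a' b') hAw rfl rfl a b
      have hz : (NormedSpace.exp (w₀ • (Yc t τ ^ l)) * (Yc t τ ^ l))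
            * flowsAux_Amat k Yb Pb X s (τ + w₀)
          + NormedSpace.exp (w₀ • (Yc t τ ^ l))
            * (-(Yc t τ ^ l * flowsAux_Amat k Yb Pb X s (τ + w₀))) = 0 := by
        rw [mul_assoc, mul_neg, add_neg_cancel]
      rw [hz] at hprod
      simpa using hprod
    have h := flowsAux_const_of hconst w 0
    simpa [NormedSpace.exp_zero] using h
  have step2' : ∀ s w : ℝ, flowsAux_Amat k Yb Pb X s (τ + w)
      = NormedSpace.exp (-(w • (Yc t τ ^ l))) * flowsAux_Amat k Yb Pb X s τ := by
    intro s w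
    rw [← step2 s w, ← mul_assoc, hinv w, one_mul]
  -- consequently u ↦ X u (τ+w) - exp(-(w•Q)) X u τ has zero u-derivative
  have stepPsi : ∀ (w u : ℝ) (a b : Fin N),
      X u (τ + w) a b - (NormedSpace.exp (-(w • (Yc t τ ^ l))) * X u τ) a b
        = X t (τ + w) a b - (NormedSpace.exp (-(w • (Yc t τ ^ l))) * X t τ) a b := by
    intro w u a b
    refine flowsAux_const_of (f := fun u' => X u' (τ + w) a b
      - (NormedSpace.exp (-(w • (Yc t τ ^ l))) * X u' τ) a b) ?_ u t
    intro u₀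
    have h1 := hXt' u₀ (τ + w) a b
    have h2 := flowsAux_hd_mulE
      (f := fun _ : ℝ => NormedSpace.exp (-(w • (Yc t τ ^ l))))
      (g := fun u' => X u' τ) (a := 0) (b := flowsAux_Amat k Yb Pb X u₀ τ)
      (fx := NormedSpace.exp (-(w • (Yc t τ ^ l)))) (gx := X u₀ τ)
      (fun a' b' => by
        simpa using hasDerivAt_const u₀ (NormedSpace.exp (-(w • (Yc t τ ^ l))) a' b'))
      (fun a' b' => hXt' u₀ τ a' b') rfl rfl a b
    have h := h1.sub h2
    rw [step2' u₀ w] at h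
    simp at h; exact h
  -- hence the problematic coefficient is constant in the t-direction
  have stepC : ∀ u : ℝ, (Yc t τ ^ (l - 1) * Pc u τ) i j = (Yc t τ ^ (l - 1) * Pc t τ) i j := by
    have key : ∀ u' : ℝ, HasDerivAt
        (fun w => X u' (τ + w) i j - (NormedSpace.exp (-(w • (Yc t τ ^ l))) * X u' τ) i j)
        (-((Yc t τ ^ (l - 1) * Pc u' τ) i j)) 0 := by
      intro u'
      have hb : HasDerivAt (fun v : ℝ => X u' v i j)
          ((-((Yc u' τ) ^ (l - 1) * Pc u' τ) - (Yc u' τ) ^ l * X u' τ) i j) (τ + 0) := by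
        rw [add_zero]; exact hX_τ u' τ i j
      have d1 := hb.comp_const_add τ 0
      have hEf : ∀ a b : Fin N,
          HasDerivAt (fun w : ℝ => NormedSpace.exp (-(w • (Yc t τ ^ l))) a b)
            ((-(Yc t τ ^ l)) a b) 0 := by
        intro a b
        have h := flowsAux_hd_entry (hasDerivAt_exp_smul_const (-(Yc t τ ^ l)) (0 : ℝ)) a b
        simp [NormedSpace.exp_zero] at h; exact h
      have d2 := flowsAux_hd_mulE
        (f := fun w : ℝ => NormedSpace.exp (-(w • (Yc t τ ^ l))))
        (g := fun _ : ℝ => X u' τ) (a := -(Yc t τ ^ l)) (b := 0)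
        (fx := 1) (gx := X u' τ)
        hEf (fun a' b' => by simpa using hasDerivAt_const (0 : ℝ) (X u' τ a' b'))
        (by simp [NormedSpace.exp_zero]) rfl i j
      have d := d1.sub d2
      rw [hYcc u' τ] at d
      have hvalM : ((-(Yc t τ ^ (l - 1) * Pc u' τ) - Yc t τ ^ l * X u' τ)
            - ((-(Yc t τ ^ l)) * X u' τ + 1 * 0) : Matrix (Fin N) (Fin N) ℂ)
          = -(Yc t τ ^ (l - 1) * Pc u' τ) := by noncomm_ring
      have hval' : (-(Yc t τ ^ (l - 1) * Pc u' τ) - Yc t τ ^ l * X u' τ) i j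
            - ((-(Yc t τ ^ l) * X u' τ + 1 * 0 : Matrix (Fin N) (Fin N) ℂ)) i j
          = -((Yc t τ ^ (l - 1) * Pc u' τ) i j) := by
        rw [← Matrix.sub_apply, hvalM, Matrix.neg_apply]
      rwa [hval'] at d
    intro u
    have h1 := key u
    have hfe : (fun w => X u (τ + w) i j
          - (NormedSpace.exp (-(w • (Yc t τ ^ l))) * X u τ) i j)
        = fun w => X t (τ + w) i j
          - (NormedSpace.exp (-(w • (Yc t τ ^ l))) * X t τ) i j :=
      funext fun w => stepPsi w u i j
    rw [hfe] at h1
    exact neg_injective (h1.unique (key t))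
  -- assemble the first mixed partial
  have conj1 : deriv (fun u : ℝ => deriv (fun v : ℝ => X u v i j) τ) t
      = (Yc t τ ^ l * Yb t τ ^ (k - 1) * Pb t τ + Yc t τ ^ l * Yb t τ ^ k * X t τ) i j := by
    have hfun : (fun u : ℝ => deriv (fun v : ℝ => X u v i j) τ)
        = fun u => -((Yc t τ ^ (l - 1) * Pc t τ) i j) - (Yc t τ ^ l * X u τ) i j := by
      funext u
      rw [(hX_τ u τ i j).deriv, hYcc u τ, Matrix.sub_apply, Matrix.neg_apply, stepC u]
    rw [hfun]
    have h2 := flowsAux_hd_mulE (f := fun _ : ℝ => Yc t τ ^ l) (g := fun u => X u τ)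
      (a := 0) (b := flowsAux_Amat k Yb Pb X t τ) (fx := Yc t τ ^ l) (gx := X t τ)
      (fun a' b' => by simpa using hasDerivAt_const t ((Yc t τ ^ l) a' b'))
      (fun a' b' => hXt' t τ a' b') rfl rfl i j
    have h := (hasDerivAt_const t (-((Yc t τ ^ (l - 1) * Pc t τ) i j))).sub h2
    have hval : 0 - ((0 * X t τ + Yc t τ ^ l * flowsAux_Amat k Yb Pb X t τ
          : Matrix (Fin N) (Fin N) ℂ)) i j
        = (Yc t τ ^ l * Yb t τ ^ (k - 1) * Pb t τ + Yc t τ ^ l * Yb t τ ^ k * X t τ) i j := by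
      rw [zero_mul, zero_add, zero_sub, ← Matrix.neg_apply, hfin t τ]
    exact h.deriv.trans hval
  exact ⟨conj1, conj2⟩

end
end FlowsAux
end
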